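/- Unisolvency of the 3D space U_K on the unit cube: if v ∈ U_K has vanishing first two moments of v·t on every edge and vanishing average of v∧n on every face, then v = 0. -/
import Mathlib


/-- The space `U_K = P_{1,1,1}(ℝ³)³ +
span{y²z,yz²,y²,z²} × span{x²z,xz²,x²,z²} × span{x²y,xy²,x²,y²}`. -/
def UK : Set (ℝ → ℝ → ℝ → (Fin 3 → ℝ)) :=
  {u | ∃ b : Fin 3 → Fin 8 → ℝ, ∃ α1 α2 α3 α4 β1 β2 β3 β4 γ1 γ2 γ3 γ4 : ℝ, ∀ x y z : ℝ,
    u x y z =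
      ![b 0 0 + b 0 1 * x + b 0 2 * y + b 0 3 * z + b 0 4 * x * y + b 0 5 * x * z
          + b 0 6 * y * z + b 0 7 * x * y * z
          + α1 * y ^ 2 * z + α2 * y * z ^ 2 + α3 * y ^ 2 + α4 * z ^ 2,
        b 1 0 + b 1 1 * x + b 1 2 * y + b 1 3 * z + b 1 4 * x * y + b 1 5 * x * z
          + b 1 6 * y * z + b 1 7 * x * y * z
          + β1 * x ^ 2 * z + β2 * x * z ^ 2 + β3 * x ^ 2 + β4 * z ^ 2,
        b 2 0 + b 2 1 * x + b 2 2 * y + b 2 3 * z + b 2 4 * x * y + b 2 5 * x * z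
          + b 2 6 * y * z + b 2 7 * x * y * z
          + γ1 * x ^ 2 * y + γ2 * x * y ^ 2 + γ3 * x ^ 2 + γ4 * y ^ 2]}

/-- cross product of vectors in `ℝ³` -/
def cross (u w : Fin 3 → ℝ) : Fin 3 → ℝ :=
  ![u 1 * w 2 - u 2 * w 1, u 2 * w 0 - u 0 * w 2, u 0 * w 1 - u 1 * w 0]

private lemma pint (A B C D : ℝ) :
    (∫ s in (0:ℝ)..1, (A + B*s + C*s^2 + D*s^3)) = A + B/2 + C/3 + D/4 := by
  have h : ∀ s ∈ Set.uIcc (0:ℝ) 1,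
      HasDerivAt (fun x : ℝ => A*x + B*x^2/2 + C*x^3/3 + D*x^4/4)
        (A + B*s + C*s^2 + D*s^3) s := by
    intro s _
    have h1 : HasDerivAt (fun x : ℝ => A*x + B*x^2/2 + C*x^3/3 + D*x^4/4)
        (A*1 + B*((2:ℕ)*s^(2-1))/2 + C*((3:ℕ)*s^(3-1))/3 + D*((4:ℕ)*s^(4-1))/4) s := by
      have := (hasDerivAt_id s)
      exact ((((this).const_mul A).add
        (((hasDerivAt_pow 2 s).const_mul B).div_const 2)).add
        (((hasDerivAt_pow 3 s).const_mul C).div_const 3)).add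
        (((hasDerivAt_pow 4 s).const_mul D).div_const 4)
    convert h1 using 1
    push_cast; ring
  rw [intervalIntegral.integral_eq_sub_of_hasDerivAt h
    ((Continuous.intervalIntegrable (by fun_prop) _ _))]
  norm_num

/-- Unisolvency of `U_K` on the unit cube `K = [0,1]³`: if `v ∈ U_K` has
vanishing first two moments `∫_e (v·t) sⁱ ds`, `i = 0,1`, on each of the 12
edges (with tangent `t`) and vanishing average `∫_f v∧n` on each of the 6
faces (with outward normal `n`), then `v = 0`. For the face `x = x0`,
`x0 ∈ {0,1}`, the outward normal is `(2x0−1, 0, 0)`, and similarly for the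
other faces. -/
theorem stmt_14 (v : ℝ → ℝ → ℝ → (Fin 3 → ℝ)) (hv : v ∈ UK)
    -- edge moments: edges parallel to the x-axis (tangent e₁)
    (hex : ∀ y0 z0 : ℝ, (y0 = 0 ∨ y0 = 1) → (z0 = 0 ∨ z0 = 1) →
      (∫ s in (0:ℝ)..1, v s y0 z0 0) = 0 ∧ (∫ s in (0:ℝ)..1, s * v s y0 z0 0) = 0)
    -- edges parallel to the y-axis (tangent e₂)
    (hey : ∀ x0 z0 : ℝ, (x0 = 0 ∨ x0 = 1) → (z0 = 0 ∨ z0 = 1) →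
      (∫ s in (0:ℝ)..1, v x0 s z0 1) = 0 ∧ (∫ s in (0:ℝ)..1, s * v x0 s z0 1) = 0)
    -- edges parallel to the z-axis (tangent e₃)
    (hez : ∀ x0 y0 : ℝ, (x0 = 0 ∨ x0 = 1) → (y0 = 0 ∨ y0 = 1) →
      (∫ s in (0:ℝ)..1, v x0 y0 s 2) = 0 ∧ (∫ s in (0:ℝ)..1, s * v x0 y0 s 2) = 0)
    -- face averages of v ∧ n
    (hfx : ∀ x0 : ℝ, (x0 = 0 ∨ x0 = 1) → ∀ i : Fin 3,
      (∫ s in (0:ℝ)..1, ∫ t in (0:ℝ)..1, cross (v x0 s t) ![2 * x0 - 1, 0, 0] i) = 0)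
    (hfy : ∀ y0 : ℝ, (y0 = 0 ∨ y0 = 1) → ∀ i : Fin 3,
      (∫ s in (0:ℝ)..1, ∫ t in (0:ℝ)..1, cross (v s y0 t) ![0, 2 * y0 - 1, 0] i) = 0)
    (hfz : ∀ z0 : ℝ, (z0 = 0 ∨ z0 = 1) → ∀ i : Fin 3,
      (∫ s in (0:ℝ)..1, ∫ t in (0:ℝ)..1, cross (v s t z0) ![0, 0, 2 * z0 - 1] i) = 0) :
    ∀ x y z : ℝ, v x y z = 0 := by

  obtain ⟨b, p1, p2, p3, p4, q1, q2, q3, q4, r1, r2, r3, r4, hb⟩ := hv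
  have E1 := (hex 0 0 (Or.inl rfl) (Or.inl rfl)).1
  rw [intervalIntegral.integral_congr
      (g := fun s => ((1) * b 0 0) + ((1) * b 0 1)*s + ((0:ℝ))*s^2 + ((0:ℝ))*s^3)
      (fun s _ => by rw [hb]; simp [cross]; try ring), pint] at E1
  have E2 := (hex 0 0 (Or.inl rfl) (Or.inl rfl)).2
  rw [intervalIntegral.integral_congr
      (g := fun s => ((0:ℝ)) + ((1) * b 0 0)*s + ((1) * b 0 1)*s^2 + ((0:ℝ))*s^3)
      (fun s _ => by rw [hb]; simp [cross]; try ring), pint] at E2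
  have E3 := (hex 0 1 (Or.inl rfl) (Or.inr rfl)).1
  rw [intervalIntegral.integral_congr
      (g := fun s => ((1) * p4 + (1) * b 0 0 + (1) * b 0 3) + ((1) * b 0 1 + (1) * b 0 5)*s + ((0:ℝ))*s^2 + ((0:ℝ))*s^3)
      (fun s _ => by rw [hb]; simp [cross]; try ring), pint] at E3
  have E4 := (hex 0 1 (Or.inl rfl) (Or.inr rfl)).2
  rw [intervalIntegral.integral_congr
      (g := fun s => ((0:ℝ)) + ((1) * p4 + (1) * b 0 0 + (1) * b 0 3)*s + ((1) * b 0 1 + (1) * b 0 5)*s^2 + ((0:ℝ))*s^3)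
      (fun s _ => by rw [hb]; simp [cross]; try ring), pint] at E4
  have E5 := (hex 1 0 (Or.inr rfl) (Or.inl rfl)).1
  rw [intervalIntegral.integral_congr
      (g := fun s => ((1) * p3 + (1) * b 0 0 + (1) * b 0 2) + ((1) * b 0 1 + (1) * b 0 4)*s + ((0:ℝ))*s^2 + ((0:ℝ))*s^3)
      (fun s _ => by rw [hb]; simp [cross]; try ring), pint] at E5
  have E6 := (hex 1 0 (Or.inr rfl) (Or.inl rfl)).2
  rw [intervalIntegral.integral_congr
      (g := fun s => ((0:ℝ)) + ((1) * p3 + (1) * b 0 0 + (1) * b 0 2)*s + ((1) * b 0 1 + (1) * b 0 4)*s^2 + ((0:ℝ))*s^3)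
      (fun s _ => by rw [hb]; simp [cross]; try ring), pint] at E6
  have E7 := (hex 1 1 (Or.inr rfl) (Or.inr rfl)).1
  rw [intervalIntegral.integral_congr
      (g := fun s => ((1) * p1 + (1) * p2 + (1) * p3 + (1) * p4 + (1) * b 0 0 + (1) * b 0 2 + (1) * b 0 3 + (1) * b 0 6) + ((1) * b 0 1 + (1) * b 0 4 + (1) * b 0 5 + (1) * b 0 7)*s + ((0:ℝ))*s^2 + ((0:ℝ))*s^3)
      (fun s _ => by rw [hb]; simp [cross]; try ring), pint] at E7
  have E8 := (hex 1 1 (Or.inr rfl) (Or.inr rfl)).2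
  rw [intervalIntegral.integral_congr
      (g := fun s => ((0:ℝ)) + ((1) * p1 + (1) * p2 + (1) * p3 + (1) * p4 + (1) * b 0 0 + (1) * b 0 2 + (1) * b 0 3 + (1) * b 0 6)*s + ((1) * b 0 1 + (1) * b 0 4 + (1) * b 0 5 + (1) * b 0 7)*s^2 + ((0:ℝ))*s^3)
      (fun s _ => by rw [hb]; simp [cross]; try ring), pint] at E8
  have E9 := (hey 0 0 (Or.inl rfl) (Or.inl rfl)).1
  rw [intervalIntegral.integral_congr
      (g := fun s => ((1) * b 1 0) + ((1) * b 1 2)*s + ((0:ℝ))*s^2 + ((0:ℝ))*s^3)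
      (fun s _ => by rw [hb]; simp [cross]; try ring), pint] at E9
  have E10 := (hey 0 0 (Or.inl rfl) (Or.inl rfl)).2
  rw [intervalIntegral.integral_congr
      (g := fun s => ((0:ℝ)) + ((1) * b 1 0)*s + ((1) * b 1 2)*s^2 + ((0:ℝ))*s^3)
      (fun s _ => by rw [hb]; simp [cross]; try ring), pint] at E10
  have E11 := (hey 0 1 (Or.inl rfl) (Or.inr rfl)).1
  rw [intervalIntegral.integral_congr
      (g := fun s => ((1) * b 1 0 + (1) * b 1 3 + (1) * q4) + ((1) * b 1 2 + (1) * b 1 6)*s + ((0:ℝ))*s^2 + ((0:ℝ))*s^3)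
      (fun s _ => by rw [hb]; simp [cross]; try ring), pint] at E11
  have E12 := (hey 0 1 (Or.inl rfl) (Or.inr rfl)).2
  rw [intervalIntegral.integral_congr
      (g := fun s => ((0:ℝ)) + ((1) * b 1 0 + (1) * b 1 3 + (1) * q4)*s + ((1) * b 1 2 + (1) * b 1 6)*s^2 + ((0:ℝ))*s^3)
      (fun s _ => by rw [hb]; simp [cross]; try ring), pint] at E12
  have E13 := (hey 1 0 (Or.inr rfl) (Or.inl rfl)).1
  rw [intervalIntegral.integral_congr
      (g := fun s => ((1) * b 1 0 + (1) * b 1 1 + (1) * q3) + ((1) * b 1 2 + (1) * b 1 4)*s + ((0:ℝ))*s^2 + ((0:ℝ))*s^3)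
      (fun s _ => by rw [hb]; simp [cross]; try ring), pint] at E13
  have E14 := (hey 1 0 (Or.inr rfl) (Or.inl rfl)).2
  rw [intervalIntegral.integral_congr
      (g := fun s => ((0:ℝ)) + ((1) * b 1 0 + (1) * b 1 1 + (1) * q3)*s + ((1) * b 1 2 + (1) * b 1 4)*s^2 + ((0:ℝ))*s^3)
      (fun s _ => by rw [hb]; simp [cross]; try ring), pint] at E14
  have E15 := (hey 1 1 (Or.inr rfl) (Or.inr rfl)).1
  rw [intervalIntegral.integral_congr
      (g := fun s => ((1) * b 1 0 + (1) * b 1 1 + (1) * b 1 3 + (1) * b 1 5 + (1) * q1 + (1) * q2 + (1) * q3 + (1) * q4) + ((1) * b 1 2 + (1) * b 1 4 + (1) * b 1 6 + (1) * b 1 7)*s + ((0:ℝ))*s^2 + ((0:ℝ))*s^3)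
      (fun s _ => by rw [hb]; simp [cross]; try ring), pint] at E15
  have E16 := (hey 1 1 (Or.inr rfl) (Or.inr rfl)).2
  rw [intervalIntegral.integral_congr
      (g := fun s => ((0:ℝ)) + ((1) * b 1 0 + (1) * b 1 1 + (1) * b 1 3 + (1) * b 1 5 + (1) * q1 + (1) * q2 + (1) * q3 + (1) * q4)*s + ((1) * b 1 2 + (1) * b 1 4 + (1) * b 1 6 + (1) * b 1 7)*s^2 + ((0:ℝ))*s^3)
      (fun s _ => by rw [hb]; simp [cross]; try ring), pint] at E16
  have E17 := (hez 0 0 (Or.inl rfl) (Or.inl rfl)).1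
  rw [intervalIntegral.integral_congr
      (g := fun s => ((1) * b 2 0) + ((1) * b 2 3)*s + ((0:ℝ))*s^2 + ((0:ℝ))*s^3)
      (fun s _ => by rw [hb]; simp [cross]; try ring), pint] at E17
  have E18 := (hez 0 0 (Or.inl rfl) (Or.inl rfl)).2
  rw [intervalIntegral.integral_congr
      (g := fun s => ((0:ℝ)) + ((1) * b 2 0)*s + ((1) * b 2 3)*s^2 + ((0:ℝ))*s^3)
      (fun s _ => by rw [hb]; simp [cross]; try ring), pint] at E18
  have E19 := (hez 0 1 (Or.inl rfl) (Or.inr rfl)).1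
  rw [intervalIntegral.integral_congr
      (g := fun s => ((1) * b 2 0 + (1) * b 2 2 + (1) * r4) + ((1) * b 2 3 + (1) * b 2 6)*s + ((0:ℝ))*s^2 + ((0:ℝ))*s^3)
      (fun s _ => by rw [hb]; simp [cross]; try ring), pint] at E19
  have E20 := (hez 0 1 (Or.inl rfl) (Or.inr rfl)).2
  rw [intervalIntegral.integral_congr
      (g := fun s => ((0:ℝ)) + ((1) * b 2 0 + (1) * b 2 2 + (1) * r4)*s + ((1) * b 2 3 + (1) * b 2 6)*s^2 + ((0:ℝ))*s^3)
      (fun s _ => by rw [hb]; simp [cross]; try ring), pint] at E20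
  have E21 := (hez 1 0 (Or.inr rfl) (Or.inl rfl)).1
  rw [intervalIntegral.integral_congr
      (g := fun s => ((1) * b 2 0 + (1) * b 2 1 + (1) * r3) + ((1) * b 2 3 + (1) * b 2 5)*s + ((0:ℝ))*s^2 + ((0:ℝ))*s^3)
      (fun s _ => by rw [hb]; simp [cross]; try ring), pint] at E21
  have E22 := (hez 1 0 (Or.inr rfl) (Or.inl rfl)).2
  rw [intervalIntegral.integral_congr
      (g := fun s => ((0:ℝ)) + ((1) * b 2 0 + (1) * b 2 1 + (1) * r3)*s + ((1) * b 2 3 + (1) * b 2 5)*s^2 + ((0:ℝ))*s^3)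
      (fun s _ => by rw [hb]; simp [cross]; try ring), pint] at E22
  have E23 := (hez 1 1 (Or.inr rfl) (Or.inr rfl)).1
  rw [intervalIntegral.integral_congr
      (g := fun s => ((1) * b 2 0 + (1) * b 2 1 + (1) * b 2 2 + (1) * b 2 4 + (1) * r1 + (1) * r2 + (1) * r3 + (1) * r4) + ((1) * b 2 3 + (1) * b 2 5 + (1) * b 2 6 + (1) * b 2 7)*s + ((0:ℝ))*s^2 + ((0:ℝ))*s^3)
      (fun s _ => by rw [hb]; simp [cross]; try ring), pint] at E23
  have E24 := (hez 1 1 (Or.inr rfl) (Or.inr rfl)).2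
  rw [intervalIntegral.integral_congr
      (g := fun s => ((0:ℝ)) + ((1) * b 2 0 + (1) * b 2 1 + (1) * b 2 2 + (1) * b 2 4 + (1) * r1 + (1) * r2 + (1) * r3 + (1) * r4)*s + ((1) * b 2 3 + (1) * b 2 5 + (1) * b 2 6 + (1) * b 2 7)*s^2 + ((0:ℝ))*s^3)
      (fun s _ => by rw [hb]; simp [cross]; try ring), pint] at E24
  have E25 := hfx 0 (Or.inl rfl) 1
  rw [intervalIntegral.integral_congr
      (g := fun s => ((-1) * b 2 0 + (-1/2) * b 2 3) + ((-1) * b 2 2 + (-1/2) * b 2 6)*s + ((-1) * r4)*s^2 + ((0:ℝ))*s^3)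
      (fun s _ => by
        rw [intervalIntegral.integral_congr
          (g := fun t => (((-1) * b 2 0) + ((-1) * b 2 2) * s + ((-1) * r4) * s^2) + (((-1) * b 2 3) + ((-1) * b 2 6) * s)*t + ((0:ℝ))*t^2 + ((0:ℝ))*t^3)
          (fun t _ => by rw [hb]; simp [cross]; try ring), pint]
        ring), pint] at E25
  have E26 := hfx 0 (Or.inl rfl) 2
  rw [intervalIntegral.integral_congr
      (g := fun s => ((1) * b 1 0 + (1/2) * b 1 3 + (1/3) * q4) + ((1) * b 1 2 + (1/2) * b 1 6)*s + ((0:ℝ))*s^2 + ((0:ℝ))*s^3)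
      (fun s _ => by
        rw [intervalIntegral.integral_congr
          (g := fun t => (((1) * b 1 0) + ((1) * b 1 2) * s) + (((1) * b 1 3) + ((1) * b 1 6) * s)*t + (((1) * q4))*t^2 + ((0:ℝ))*t^3)
          (fun t _ => by rw [hb]; simp [cross]; try ring), pint]
        ring), pint] at E26
  have E27 := hfx 1 (Or.inr rfl) 1
  rw [intervalIntegral.integral_congr
      (g := fun s => ((1) * b 2 0 + (1) * b 2 1 + (1/2) * b 2 3 + (1/2) * b 2 5 + (1) * r3) + ((1) * b 2 2 + (1) * b 2 4 + (1/2) * b 2 6 + (1/2) * b 2 7 + (1) * r1)*s + ((1) * r2 + (1) * r4)*s^2 + ((0:ℝ))*s^3)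
      (fun s _ => by
        rw [intervalIntegral.integral_congr
          (g := fun t => (((1) * b 2 0 + (1) * b 2 1 + (1) * r3) + ((1) * b 2 2 + (1) * b 2 4 + (1) * r1) * s + ((1) * r2 + (1) * r4) * s^2) + (((1) * b 2 3 + (1) * b 2 5) + ((1) * b 2 6 + (1) * b 2 7) * s)*t + ((0:ℝ))*t^2 + ((0:ℝ))*t^3)
          (fun t _ => by rw [hb]; simp [cross]; try ring), pint]
        ring), pint] at E27
  have E28 := hfx 1 (Or.inr rfl) 2
  rw [intervalIntegral.integral_congr
      (g := fun s => ((-1) * b 1 0 + (-1) * b 1 1 + (-1/2) * b 1 3 + (-1/2) * b 1 5 + (-1/2) * q1 + (-1/3) * q2 + (-1) * q3 + (-1/3) * q4) + ((-1) * b 1 2 + (-1) * b 1 4 + (-1/2) * b 1 6 + (-1/2) * b 1 7)*s + ((0:ℝ))*s^2 + ((0:ℝ))*s^3)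
      (fun s _ => by
        rw [intervalIntegral.integral_congr
          (g := fun t => (((-1) * b 1 0 + (-1) * b 1 1 + (-1) * q3) + ((-1) * b 1 2 + (-1) * b 1 4) * s) + (((-1) * b 1 3 + (-1) * b 1 5 + (-1) * q1) + ((-1) * b 1 6 + (-1) * b 1 7) * s)*t + (((-1) * q2 + (-1) * q4))*t^2 + ((0:ℝ))*t^3)
          (fun t _ => by rw [hb]; simp [cross]; try ring), pint]
        ring), pint] at E28
  have E29 := hfy 0 (Or.inl rfl) 0
  rw [intervalIntegral.integral_congr
      (g := fun s => ((1) * b 2 0 + (1/2) * b 2 3) + ((1) * b 2 1 + (1/2) * b 2 5)*s + ((1) * r3)*s^2 + ((0:ℝ))*s^3)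
      (fun s _ => by
        rw [intervalIntegral.integral_congr
          (g := fun t => (((1) * b 2 0) + ((1) * b 2 1) * s + ((1) * r3) * s^2) + (((1) * b 2 3) + ((1) * b 2 5) * s)*t + ((0:ℝ))*t^2 + ((0:ℝ))*t^3)
          (fun t _ => by rw [hb]; simp [cross]; try ring), pint]
        ring), pint] at E29
  have E30 := hfy 0 (Or.inl rfl) 2
  rw [intervalIntegral.integral_congr
      (g := fun s => ((-1/3) * p4 + (-1) * b 0 0 + (-1/2) * b 0 3) + ((-1) * b 0 1 + (-1/2) * b 0 5)*s + ((0:ℝ))*s^2 + ((0:ℝ))*s^3)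
      (fun s _ => by
        rw [intervalIntegral.integral_congr
          (g := fun t => (((-1) * b 0 0) + ((-1) * b 0 1) * s) + (((-1) * b 0 3) + ((-1) * b 0 5) * s)*t + (((-1) * p4))*t^2 + ((0:ℝ))*t^3)
          (fun t _ => by rw [hb]; simp [cross]; try ring), pint]
        ring), pint] at E30
  have E31 := hfy 1 (Or.inr rfl) 0
  rw [intervalIntegral.integral_congr
      (g := fun s => ((-1) * b 2 0 + (-1) * b 2 2 + (-1/2) * b 2 3 + (-1/2) * b 2 6 + (-1) * r4) + ((-1) * b 2 1 + (-1) * b 2 4 + (-1/2) * b 2 5 + (-1/2) * b 2 7 + (-1) * r2)*s + ((-1) * r1 + (-1) * r3)*s^2 + ((0:ℝ))*s^3)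
      (fun s _ => by
        rw [intervalIntegral.integral_congr
          (g := fun t => (((-1) * b 2 0 + (-1) * b 2 2 + (-1) * r4) + ((-1) * b 2 1 + (-1) * b 2 4 + (-1) * r2) * s + ((-1) * r1 + (-1) * r3) * s^2) + (((-1) * b 2 3 + (-1) * b 2 6) + ((-1) * b 2 5 + (-1) * b 2 7) * s)*t + ((0:ℝ))*t^2 + ((0:ℝ))*t^3)
          (fun t _ => by rw [hb]; simp [cross]; try ring), pint]
        ring), pint] at E31
  have E32 := hfy 1 (Or.inr rfl) 2
  rw [intervalIntegral.integral_congr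
      (g := fun s => ((1/2) * p1 + (1/3) * p2 + (1) * p3 + (1/3) * p4 + (1) * b 0 0 + (1) * b 0 2 + (1/2) * b 0 3 + (1/2) * b 0 6) + ((1) * b 0 1 + (1) * b 0 4 + (1/2) * b 0 5 + (1/2) * b 0 7)*s + ((0:ℝ))*s^2 + ((0:ℝ))*s^3)
      (fun s _ => by
        rw [intervalIntegral.integral_congr
          (g := fun t => (((1) * p3 + (1) * b 0 0 + (1) * b 0 2) + ((1) * b 0 1 + (1) * b 0 4) * s) + (((1) * p1 + (1) * b 0 3 + (1) * b 0 6) + ((1) * b 0 5 + (1) * b 0 7) * s)*t + (((1) * p2 + (1) * p4))*t^2 + ((0:ℝ))*t^3)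
          (fun t _ => by rw [hb]; simp [cross]; try ring), pint]
        ring), pint] at E32
  have E33 := hfz 0 (Or.inl rfl) 0
  rw [intervalIntegral.integral_congr
      (g := fun s => ((-1) * b 1 0 + (-1/2) * b 1 2) + ((-1) * b 1 1 + (-1/2) * b 1 4)*s + ((-1) * q3)*s^2 + ((0:ℝ))*s^3)
      (fun s _ => by
        rw [intervalIntegral.integral_congr
          (g := fun t => (((-1) * b 1 0) + ((-1) * b 1 1) * s + ((-1) * q3) * s^2) + (((-1) * b 1 2) + ((-1) * b 1 4) * s)*t + ((0:ℝ))*t^2 + ((0:ℝ))*t^3)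
          (fun t _ => by rw [hb]; simp [cross]; try ring), pint]
        ring), pint] at E33
  have E34 := hfz 0 (Or.inl rfl) 1
  rw [intervalIntegral.integral_congr
      (g := fun s => ((1/3) * p3 + (1) * b 0 0 + (1/2) * b 0 2) + ((1) * b 0 1 + (1/2) * b 0 4)*s + ((0:ℝ))*s^2 + ((0:ℝ))*s^3)
      (fun s _ => by
        rw [intervalIntegral.integral_congr
          (g := fun t => (((1) * b 0 0) + ((1) * b 0 1) * s) + (((1) * b 0 2) + ((1) * b 0 4) * s)*t + (((1) * p3))*t^2 + ((0:ℝ))*t^3)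
          (fun t _ => by rw [hb]; simp [cross]; try ring), pint]
        ring), pint] at E34
  have E35 := hfz 1 (Or.inr rfl) 0
  rw [intervalIntegral.integral_congr
      (g := fun s => ((1) * b 1 0 + (1/2) * b 1 2 + (1) * b 1 3 + (1/2) * b 1 6 + (1) * q4) + ((1) * b 1 1 + (1/2) * b 1 4 + (1) * b 1 5 + (1/2) * b 1 7 + (1) * q2)*s + ((1) * q1 + (1) * q3)*s^2 + ((0:ℝ))*s^3)
      (fun s _ => by
        rw [intervalIntegral.integral_congr
          (g := fun t => (((1) * b 1 0 + (1) * b 1 3 + (1) * q4) + ((1) * b 1 1 + (1) * b 1 5 + (1) * q2) * s + ((1) * q1 + (1) * q3) * s^2) + (((1) * b 1 2 + (1) * b 1 6) + ((1) * b 1 4 + (1) * b 1 7) * s)*t + ((0:ℝ))*t^2 + ((0:ℝ))*t^3)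
          (fun t _ => by rw [hb]; simp [cross]; try ring), pint]
        ring), pint] at E35
  have E36 := hfz 1 (Or.inr rfl) 1
  rw [intervalIntegral.integral_congr
      (g := fun s => ((-1/3) * p1 + (-1/2) * p2 + (-1/3) * p3 + (-1) * p4 + (-1) * b 0 0 + (-1/2) * b 0 2 + (-1) * b 0 3 + (-1/2) * b 0 6) + ((-1) * b 0 1 + (-1/2) * b 0 4 + (-1) * b 0 5 + (-1/2) * b 0 7)*s + ((0:ℝ))*s^2 + ((0:ℝ))*s^3)
      (fun s _ => by
        rw [intervalIntegral.integral_congr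
          (g := fun t => (((-1) * p4 + (-1) * b 0 0 + (-1) * b 0 3) + ((-1) * b 0 1 + (-1) * b 0 5) * s) + (((-1) * p2 + (-1) * b 0 2 + (-1) * b 0 6) + ((-1) * b 0 4 + (-1) * b 0 7) * s)*t + (((-1) * p1 + (-1) * p3))*t^2 + ((0:ℝ))*t^3)
          (fun t _ => by rw [hb]; simp [cross]; try ring), pint]
        ring), pint] at E36
  have Z1 : b 0 0 = 0 := by linear_combination (4 : ℝ) * E1 + (-6 : ℝ) * E2
  have Z2 : b 0 1 = 0 := by linear_combination (-6 : ℝ) * E1 + (12 : ℝ) * E2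
  have Z3 : b 0 2 = 0 := by linear_combination (-7 : ℝ) * E1 + (6 : ℝ) * E2 + (1 : ℝ) * E5 + (-6 : ℝ) * E6 + (6 : ℝ) * E34
  have Z4 : b 0 3 = 0 := by linear_combination (-7 : ℝ) * E1 + (6 : ℝ) * E2 + (1 : ℝ) * E3 + (-6 : ℝ) * E4 + (-6 : ℝ) * E30
  have Z5 : b 0 4 = 0 := by linear_combination (6 : ℝ) * E1 + (-12 : ℝ) * E2 + (-6 : ℝ) * E5 + (12 : ℝ) * E6
  have Z6 : b 0 5 = 0 := by linear_combination (6 : ℝ) * E1 + (-12 : ℝ) * E2 + (-6 : ℝ) * E3 + (12 : ℝ) * E4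
  have Z7 : b 0 6 = 0 := by linear_combination (10 : ℝ) * E1 + (-6 : ℝ) * E2 + (-4 : ℝ) * E3 + (6 : ℝ) * E4 + (-4 : ℝ) * E5 + (6 : ℝ) * E6 + (-2 : ℝ) * E7 + (-6 : ℝ) * E8 + (6 : ℝ) * E30 + (6 : ℝ) * E32 + (-6 : ℝ) * E34 + (-6 : ℝ) * E36
  have Z8 : b 0 7 = 0 := by linear_combination (-6 : ℝ) * E1 + (12 : ℝ) * E2 + (6 : ℝ) * E3 + (-12 : ℝ) * E4 + (6 : ℝ) * E5 + (-12 : ℝ) * E6 + (-6 : ℝ) * E7 + (12 : ℝ) * E8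
  have Z9 : b 1 0 = 0 := by linear_combination (4 : ℝ) * E9 + (-6 : ℝ) * E10
  have Z10 : b 1 1 = 0 := by linear_combination (-7 : ℝ) * E9 + (6 : ℝ) * E10 + (1 : ℝ) * E13 + (-6 : ℝ) * E14 + (-6 : ℝ) * E33
  have Z11 : b 1 2 = 0 := by linear_combination (-6 : ℝ) * E9 + (12 : ℝ) * E10
  have Z12 : b 1 3 = 0 := by linear_combination (-7 : ℝ) * E9 + (6 : ℝ) * E10 + (1 : ℝ) * E11 + (-6 : ℝ) * E12 + (6 : ℝ) * E26
  have Z13 : b 1 4 = 0 := by linear_combination (6 : ℝ) * E9 + (-12 : ℝ) * E10 + (-6 : ℝ) * E13 + (12 : ℝ) * E14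
  have Z14 : b 1 5 = 0 := by linear_combination (10 : ℝ) * E9 + (-6 : ℝ) * E10 + (-4 : ℝ) * E11 + (6 : ℝ) * E12 + (-4 : ℝ) * E13 + (6 : ℝ) * E14 + (-2 : ℝ) * E15 + (-6 : ℝ) * E16 + (-6 : ℝ) * E26 + (-6 : ℝ) * E28 + (6 : ℝ) * E33 + (6 : ℝ) * E35
  have Z15 : b 1 6 = 0 := by linear_combination (6 : ℝ) * E9 + (-12 : ℝ) * E10 + (-6 : ℝ) * E11 + (12 : ℝ) * E12
  have Z16 : b 1 7 = 0 := by linear_combination (-6 : ℝ) * E9 + (12 : ℝ) * E10 + (6 : ℝ) * E11 + (-12 : ℝ) * E12 + (6 : ℝ) * E13 + (-12 : ℝ) * E14 + (-6 : ℝ) * E15 + (12 : ℝ) * E16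
  have Z17 : b 2 0 = 0 := by linear_combination (4 : ℝ) * E17 + (-6 : ℝ) * E18
  have Z18 : b 2 1 = 0 := by linear_combination (-7 : ℝ) * E17 + (6 : ℝ) * E18 + (1 : ℝ) * E21 + (-6 : ℝ) * E22 + (6 : ℝ) * E29
  have Z19 : b 2 2 = 0 := by linear_combination (-7 : ℝ) * E17 + (6 : ℝ) * E18 + (1 : ℝ) * E19 + (-6 : ℝ) * E20 + (-6 : ℝ) * E25
  have Z20 : b 2 3 = 0 := by linear_combination (-6 : ℝ) * E17 + (12 : ℝ) * E18
  have Z21 : b 2 4 = 0 := by linear_combination (10 : ℝ) * E17 + (-6 : ℝ) * E18 + (-4 : ℝ) * E19 + (6 : ℝ) * E20 + (-4 : ℝ) * E21 + (6 : ℝ) * E22 + (-2 : ℝ) * E23 + (-6 : ℝ) * E24 + (6 : ℝ) * E25 + (6 : ℝ) * E27 + (-6 : ℝ) * E29 + (-6 : ℝ) * E31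
  have Z22 : b 2 5 = 0 := by linear_combination (6 : ℝ) * E17 + (-12 : ℝ) * E18 + (-6 : ℝ) * E21 + (12 : ℝ) * E22
  have Z23 : b 2 6 = 0 := by linear_combination (6 : ℝ) * E17 + (-12 : ℝ) * E18 + (-6 : ℝ) * E19 + (12 : ℝ) * E20
  have Z24 : b 2 7 = 0 := by linear_combination (-6 : ℝ) * E17 + (12 : ℝ) * E18 + (6 : ℝ) * E19 + (-12 : ℝ) * E20 + (6 : ℝ) * E21 + (-12 : ℝ) * E22 + (-6 : ℝ) * E23 + (12 : ℝ) * E24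
  have Z25 : p1 = 0 := by linear_combination (-3 : ℝ) * E1 + (3 : ℝ) * E3 + (-3 : ℝ) * E5 + (3 : ℝ) * E7 + (6 : ℝ) * E34 + (6 : ℝ) * E36
  have Z26 : p2 = 0 := by linear_combination (-3 : ℝ) * E1 + (-3 : ℝ) * E3 + (3 : ℝ) * E5 + (3 : ℝ) * E7 + (-6 : ℝ) * E30 + (-6 : ℝ) * E32
  have Z27 : p3 = 0 := by linear_combination (3 : ℝ) * E1 + (3 : ℝ) * E5 + (-6 : ℝ) * E34
  have Z28 : p4 = 0 := by linear_combination (3 : ℝ) * E1 + (3 : ℝ) * E3 + (6 : ℝ) * E30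
  have Z29 : q1 = 0 := by linear_combination (-3 : ℝ) * E9 + (3 : ℝ) * E11 + (-3 : ℝ) * E13 + (3 : ℝ) * E15 + (-6 : ℝ) * E33 + (-6 : ℝ) * E35
  have Z30 : q2 = 0 := by linear_combination (-3 : ℝ) * E9 + (-3 : ℝ) * E11 + (3 : ℝ) * E13 + (3 : ℝ) * E15 + (6 : ℝ) * E26 + (6 : ℝ) * E28
  have Z31 : q3 = 0 := by linear_combination (3 : ℝ) * E9 + (3 : ℝ) * E13 + (6 : ℝ) * E33
  have Z32 : q4 = 0 := by linear_combination (3 : ℝ) * E9 + (3 : ℝ) * E11 + (-6 : ℝ) * E26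
  have Z33 : r1 = 0 := by linear_combination (-3 : ℝ) * E17 + (3 : ℝ) * E19 + (-3 : ℝ) * E21 + (3 : ℝ) * E23 + (6 : ℝ) * E29 + (6 : ℝ) * E31
  have Z34 : r2 = 0 := by linear_combination (-3 : ℝ) * E17 + (-3 : ℝ) * E19 + (3 : ℝ) * E21 + (3 : ℝ) * E23 + (-6 : ℝ) * E25 + (-6 : ℝ) * E27
  have Z35 : r3 = 0 := by linear_combination (3 : ℝ) * E17 + (3 : ℝ) * E21 + (-6 : ℝ) * E29
  have Z36 : r4 = 0 := by linear_combination (3 : ℝ) * E17 + (3 : ℝ) * E19 + (6 : ℝ) * E25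
  intro x y z
  rw [hb]
  funext i
  fin_cases i <;>
    simp [Z1, Z2, Z3, Z4, Z5, Z6, Z7, Z8, Z9, Z10, Z11, Z12, Z13, Z14, Z15, Z16, Z17, Z18, Z19, Z20, Z21, Z22, Z23, Z24, Z25, Z26, Z27, Z28, Z29, Z30, Z31, Z32, Z33, Z34, Z35, Z36]
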